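/- Let μ, ν be finite sets and f_a : μ → Fin 2, f_b : Fin 2 × ν → Fin 2, f_c : Fin 2 × ν → Fin 2 define the instrumental scenario observation map. Let P be the pushforward of any product distribution P_μ ⊗ P_ν. Whenever P(a = 0) > 0 and P(a = 1) > 0, the instrumental inequality holds: P(b = 0, c = 0 | a = 0) + P(b = 0, c = 1 | a = 1) ≤ 1. -/

import Mathlib

lemma factor_sum {μ ν : Type*} [Fintype μ] [Fintype ν]
    (Pμ : μ → ℝ) (Pν : ν → ℝ) (pa : μ → Prop) (pb : ν → Prop)
    [DecidablePred pa] [DecidablePred pb] :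
    (∑ p ∈ Finset.univ.filter (fun p : μ × ν => pa p.1 ∧ pb p.2),
        Pμ p.1 * Pν p.2)
      = (∑ x ∈ Finset.univ.filter pa, Pμ x) *
        (∑ y ∈ Finset.univ.filter pb, Pν y) := by
  rw [← Finset.univ_product_univ, Finset.filter_product, Finset.sum_product,
    Finset.sum_mul_sum]

/-- any functional causal model of the instrumental scenario
satisfies Pearl's instrumental inequality
`P(b=0,c=0|a=0) + P(b=0,c=1|a=1) ≤ 1`. -/
theorem instrumental_inequality
    {μ ν : Type*} [Fintype μ] [Fintype ν]
    (Pμ : μ → ℝ) (Pν : ν → ℝ)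
    (hμ0 : ∀ x, 0 ≤ Pμ x) (hμ1 : ∑ x, Pμ x = 1)
    (hν0 : ∀ x, 0 ≤ Pν x) (hν1 : ∑ x, Pν x = 1)
    (f_a : μ → Fin 2) (f_b : Fin 2 × ν → Fin 2) (f_c : Fin 2 × ν → Fin 2)
    (ha0 : 0 < ∑ p ∈ Finset.univ.filter (fun p : μ × ν => f_a p.1 = 0),
        Pμ p.1 * Pν p.2)
    (ha1 : 0 < ∑ p ∈ Finset.univ.filter (fun p : μ × ν => f_a p.1 = 1),
        Pμ p.1 * Pν p.2) :
    (∑ p ∈ Finset.univ.filter (fun p : μ × ν =>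
        f_a p.1 = 0 ∧ f_b (f_a p.1, p.2) = 0 ∧ f_c (f_b (f_a p.1, p.2), p.2) = 0),
        Pμ p.1 * Pν p.2) /
      (∑ p ∈ Finset.univ.filter (fun p : μ × ν => f_a p.1 = 0), Pμ p.1 * Pν p.2)
    + (∑ p ∈ Finset.univ.filter (fun p : μ × ν =>
        f_a p.1 = 1 ∧ f_b (f_a p.1, p.2) = 0 ∧ f_c (f_b (f_a p.1, p.2), p.2) = 1),
        Pμ p.1 * Pν p.2) /
      (∑ p ∈ Finset.univ.filter (fun p : μ × ν => f_a p.1 = 1), Pμ p.1 * Pν p.2)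
    ≤ 1 := by
  classical
  have hden0 : (∑ p ∈ Finset.univ.filter (fun p : μ × ν => f_a p.1 = 0),
      Pμ p.1 * Pν p.2)
      = (∑ x ∈ Finset.univ.filter (fun x => f_a x = 0), Pμ x) * 1 := by
    rw [← hν1]
    have := factor_sum Pμ Pν (fun x => f_a x = 0) (fun _ : ν => True)
    simpa using this
  have hden1 : (∑ p ∈ Finset.univ.filter (fun p : μ × ν => f_a p.1 = 1),
      Pμ p.1 * Pν p.2)
      = (∑ x ∈ Finset.univ.filter (fun x => f_a x = 1), Pμ x) * 1 := by
    rw [← hν1]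
    have := factor_sum Pμ Pν (fun x => f_a x = 1) (fun _ : ν => True)
    simpa using this
  have hnum0 : (∑ p ∈ Finset.univ.filter (fun p : μ × ν =>
        f_a p.1 = 0 ∧ f_b (f_a p.1, p.2) = 0 ∧ f_c (f_b (f_a p.1, p.2), p.2) = 0),
        Pμ p.1 * Pν p.2)
      = (∑ x ∈ Finset.univ.filter (fun x => f_a x = 0), Pμ x) *
        (∑ y ∈ Finset.univ.filter
            (fun y => f_b (0, y) = 0 ∧ f_c (0, y) = 0), Pν y) := by
    rw [← factor_sum]
    congr 1
    apply Finset.filter_congr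
    intro p _
    constructor
    · rintro ⟨h1, h2, h3⟩
      rw [h1] at h2; rw [h1, h2] at h3; exact ⟨h1, h2, h3⟩
    · rintro ⟨h1, h2, h3⟩
      rw [h1]; exact ⟨rfl, h2, by rw [h2]; exact h3⟩
  have hnum1 : (∑ p ∈ Finset.univ.filter (fun p : μ × ν =>
        f_a p.1 = 1 ∧ f_b (f_a p.1, p.2) = 0 ∧ f_c (f_b (f_a p.1, p.2), p.2) = 1),
        Pμ p.1 * Pν p.2)
      = (∑ x ∈ Finset.univ.filter (fun x => f_a x = 1), Pμ x) *
        (∑ y ∈ Finset.univ.filter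
            (fun y => f_b (1, y) = 0 ∧ f_c (0, y) = 1), Pν y) := by
    rw [← factor_sum]
    congr 1
    apply Finset.filter_congr
    intro p _
    constructor
    · rintro ⟨h1, h2, h3⟩
      rw [h1] at h2; rw [h1, h2] at h3; exact ⟨h1, h2, h3⟩
    · rintro ⟨h1, h2, h3⟩
      rw [h1]; exact ⟨rfl, h2, by rw [h2]; exact h3⟩
  have hA0 : 0 < ∑ x ∈ Finset.univ.filter (fun x => f_a x = 0), Pμ x := by
    rw [hden0, mul_one] at ha0; exact ha0
  have hA1 : 0 < ∑ x ∈ Finset.univ.filter (fun x => f_a x = 1), Pμ x := by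
    rw [hden1, mul_one] at ha1; exact ha1
  rw [hnum0, hnum1, hden0, hden1, mul_one, mul_one,
    mul_div_cancel_left₀ _ hA0.ne', mul_div_cancel_left₀ _ hA1.ne']
  calc (∑ y ∈ Finset.univ.filter (fun y => f_b (0, y) = 0 ∧ f_c (0, y) = 0), Pν y)
      + (∑ y ∈ Finset.univ.filter (fun y => f_b (1, y) = 0 ∧ f_c (0, y) = 1), Pν y)
      ≤ ∑ y, Pν y := by
        rw [← Finset.sum_union]
        · apply Finset.sum_le_sum_of_subset_of_nonneg (Finset.subset_univ _)
          intro i _ _; exact hν0 i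
        · rw [Finset.disjoint_filter]
          rintro x _ ⟨_, h0⟩ ⟨_, h1⟩
          rw [h0] at h1; exact absurd h1 (by decide)
    _ = 1 := hν1
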